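/- Let $q \equiv 1 \pmod 4$ be a prime power and let $D$ be the set of nonzero quadratic residues in $\mathbb{F}_q$. For $x \in \mathbb{F}_q^*$ let $D_x = D \cap (D + x)$ and define $\bar{D}_x = D_x$ if $x$ is a nonsquare and $\bar{D}_x = D_x \cup \{0\}$ if $x$ is a nonzero square. Then $\{\bar{D}_x : x \in \mathbb{F}_q^*\}$ is a $\left(q, \frac{q-1}{4}, \frac{(q-1)(q-5)}{16}; q-1\right)$ difference family in $(\mathbb{F}_q, +)$: each $\bar{D}_x$ has $(q-1)/4$ elements, and every nonzero $g \in \mathbb{F}_q$ occurs exactly $(q-1)(q-5)/16$ times in the multiset union over all $x$ of $\{d_1 - d_2 : d_1, d_2 \in \bar{D}_x, d_1 \ne d_2\}$. -/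

import Mathlib

open scoped Classical
open Finset

lemma aux_sum {F : Type*} [Field F] [Fintype F] (hchar : ringChar F ≠ 2)
    {x : F} (hx : x ≠ 0) :
    ∑ y : F, quadraticChar F y * quadraticChar F (y - x) = -1 := by
  classical
  have h0 : ∑ y : F, quadraticChar F y * quadraticChar F (y - x)
      = ∑ y ∈ Finset.univ.erase 0, quadraticChar F y * quadraticChar F (y - x) := by
    rw [← Finset.add_sum_erase _ _ (Finset.mem_univ (0:F))]
    simp
  rw [h0]
  have h1 : ∑ y ∈ Finset.univ.erase 0, quadraticChar F y * quadraticChar F (y - x)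
      = ∑ t ∈ Finset.univ.erase 1, quadraticChar F t := by
    apply Finset.sum_nbij' (i := fun y => 1 - x * y⁻¹) (j := fun t => x * (1 - t)⁻¹)
    · intro y hy
      simp only [Finset.mem_erase, Finset.mem_univ, and_true] at hy ⊢
      intro h
      apply hx
      have : x * y⁻¹ = 0 := by linear_combination -h
      rcases mul_eq_zero.1 this with h' | h'
      · exact h'
      · exact absurd (inv_eq_zero.1 h') hy
    · intro t ht
      simp only [Finset.mem_erase, Finset.mem_univ, and_true] at ht ⊢
      exact mul_ne_zero hx (inv_ne_zero (sub_ne_zero.2 (Ne.symm ht)))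
    · intro y hy
      simp only [Finset.mem_erase, Finset.mem_univ, and_true] at hy
      field_simp
      rw [sub_sub_cancel, div_self hx]
    · intro t ht
      simp only [Finset.mem_erase, Finset.mem_univ, and_true] at ht
      have h1t : (1:F) - t ≠ 0 := sub_ne_zero.2 (Ne.symm ht)
      field_simp
      ring
    · intro y hy
      simp only [Finset.mem_erase, Finset.mem_univ, and_true] at hy
      have : quadraticChar F y * quadraticChar F (y - x)
          = quadraticChar F (y * (y - x)) := (map_mul _ _ _).symm
      rw [this]
      have hyy : y * (y - x) = y ^ 2 * (1 - x * y⁻¹) := by field_simp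
      rw [hyy, map_mul, quadraticChar_sq_one' hy, one_mul]
  rw [h1]
  have := Finset.sum_erase_eq_sub (f := fun t => quadraticChar F t) (Finset.mem_univ (1:F))
  rw [this, quadraticChar_sum_zero hchar]
  simp

lemma aux_card {F : Type*} [Field F] [Fintype F] (hchar : ringChar F ≠ 2)
    (hneg : quadraticChar F (-1) = 1)
    (D : Finset F) (hD : D = Finset.univ.filter (fun x : F => x ≠ 0 ∧ IsSquare x))
    {x : F} (hx : x ≠ 0) :
    4 * (((D ∩ D.image (· + x)).card : ℤ)) =
      (Fintype.card F : ℤ) - 3 - 2 * quadraticChar F x := by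
  classical
  have hmemD : ∀ y : F, y ∈ D ↔ y ≠ 0 ∧ IsSquare y := by simp [hD]
  have hind : ∀ y : F, y ≠ 0 → 1 + quadraticChar F y = if y ∈ D then 2 else 0 := by
    intro y hy
    by_cases h : IsSquare y
    · rw [if_pos ((hmemD y).2 ⟨hy, h⟩), (quadraticChar_one_iff_isSquare hy).2 h]; ring
    · rw [if_neg (fun hc => h ((hmemD y).1 hc).2),
        quadraticChar_neg_one_iff_not_isSquare.2 h]; ring
  set S := D ∩ D.image (· + x) with hSdef
  have hmemS : ∀ y : F, y ∈ S ↔ y ∈ D ∧ y - x ∈ D := by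
    intro y
    simp only [hSdef, Finset.mem_inter, Finset.mem_image, and_congr_right_iff]
    intro _
    constructor
    · rintro ⟨a, ha, rfl⟩; simpa using ha
    · intro h; exact ⟨y - x, h, by ring⟩
  have key : ∑ y : F, (1 + quadraticChar F y) * (1 + quadraticChar F (y - x))
      = 4 * (S.card : ℤ) + 2 * (1 + quadraticChar F x) := by
    have hpt : ∀ y ∈ Finset.univ, (1 + quadraticChar F y) * (1 + quadraticChar F (y - x))
        = (if y ∈ S then (4:ℤ) else 0)
          + ((if y = 0 then 1 + quadraticChar F x else 0)
            + (if y = x then 1 + quadraticChar F x else 0)) := by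
      intro y _
      by_cases hy0 : y = 0
      · subst hy0
        have h1 : quadraticChar F ((0:F) - x) = quadraticChar F x := by
          rw [zero_sub, ← neg_one_mul, map_mul, hneg, one_mul]
        have h2 : (0:F) ∉ S := fun hc => by
          have := ((hmemS 0).1 hc).1
          exact ((hmemD 0).1 this).1 rfl
        rw [quadraticChar_zero, h1, if_neg h2, if_pos rfl, if_neg (Ne.symm hx)]
        ring
      · by_cases hyx : y = x
        · subst hyx
          have h2 : y ∉ S := fun hc => by
            have := ((hmemS y).1 hc).2
            rw [sub_self] at this
            exact ((hmemD 0).1 this).1 rfl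
          rw [sub_self, quadraticChar_zero, if_neg h2, if_neg hy0, if_pos rfl]
          ring
        · rw [hind y hy0, hind (y - x) (sub_ne_zero.2 hyx), if_neg hy0, if_neg hyx]
          by_cases h1 : y ∈ D <;> by_cases h2 : y - x ∈ D <;>
            simp [h1, h2, hmemS, (by simp [hmemS, h1, h2] : (y ∈ S) ↔ (y ∈ D ∧ y - x ∈ D))]
    rw [Finset.sum_congr rfl hpt, Finset.sum_add_distrib, Finset.sum_add_distrib]
    simp only [Finset.sum_ite_eq', Finset.mem_univ, if_pos]
    rw [Finset.sum_ite_mem, Finset.univ_inter, Finset.sum_const]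
    push_cast
    ring
  have e1 : ∑ y : F, quadraticChar F y = 0 := quadraticChar_sum_zero hchar
  have e2 : ∑ y : F, quadraticChar F (y - x) = 0 :=
    (Fintype.sum_equiv (Equiv.subRight x) _ _ fun y => rfl).trans e1
  have e3 := aux_sum hchar hx
  have expand : ∑ y : F, (1 + quadraticChar F y) * (1 + quadraticChar F (y - x))
      = (Fintype.card F : ℤ) - 1 := by
    have : ∀ y ∈ Finset.univ, (1 + quadraticChar F y) * (1 + quadraticChar F (y - x))
        = 1 + quadraticChar F y + quadraticChar F (y - x)
          + quadraticChar F y * quadraticChar F (y - x) := by intros; ring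
    rw [Finset.sum_congr rfl this, Finset.sum_add_distrib, Finset.sum_add_distrib,
      Finset.sum_add_distrib, e1, e2, e3, Finset.sum_const, Finset.card_univ]
    push_cast; ring
  rw [expand] at key
  linarith
open scoped Classical

theorem stmt_18 (q : ℕ) (hq : IsPrimePow q) (hq1 : q % 4 = 1)
    {F : Type*} [Field F] [Fintype F] (hF : Fintype.card F = q)
    (D : Finset F)
    (hD : D = Finset.univ.filter (fun x : F => x ≠ 0 ∧ IsSquare x))
    (Dbar : F → Finset F)
    (hDbar : ∀ x : F, Dbar x =
      if IsSquare x then insert 0 (D ∩ D.image (· + x))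
      else D ∩ D.image (· + x)) :
    (∀ x : F, x ≠ 0 → 4 * (Dbar x).card = q - 1) ∧
    (∀ g : F, g ≠ 0 →
      16 * ∑ x ∈ Finset.univ.filter (fun x : F => x ≠ 0),
        (((Dbar x) ×ˢ (Dbar x)).filter
          (fun p => p.1 ≠ p.2 ∧ p.1 - p.2 = g)).card
        = (q - 1) * (q - 5)) := by
  have hq5 : 5 ≤ q := by have := hq.two_le; omega
  have hchar : ringChar F ≠ 2 := by
    intro h
    have := FiniteField.even_card_of_char_two h
    rw [hF] at this; omega
  have hneg : quadraticChar F (-1) = 1 := by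
    rw [quadraticChar_one_iff_isSquare (neg_ne_zero.2 one_ne_zero)]
    rw [FiniteField.isSquare_neg_one_iff, hF]; omega
  have hmemD : ∀ y : F, y ∈ D ↔ y ≠ 0 ∧ IsSquare y := by simp [hD]
  have h0D : (0 : F) ∉ D := fun h => ((hmemD 0).1 h).1 rfl
  have hcard : ∀ x : F, x ≠ 0 → 4 * (((D ∩ D.image (· + x)).card : ℤ)) =
      (q : ℤ) - 3 - 2 * quadraticChar F x := by
    intro x hx
    rw [aux_card hchar hneg D hD hx, hF]
  constructor
  · intro x hx
    have h4 := hcard x hx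
    by_cases hsq : IsSquare x
    · have hχ : quadraticChar F x = 1 := (quadraticChar_one_iff_isSquare hx).2 hsq
      rw [hχ] at h4
      have h0 : (0:F) ∉ D ∩ D.image (· + x) := fun h => h0D (Finset.mem_inter.1 h).1
      have : (Dbar x).card = (D ∩ D.image (· + x)).card + 1 := by
        rw [hDbar x, if_pos hsq, Finset.card_insert_of_notMem h0]
      rw [this]; omega
    · have hχ : quadraticChar F x = -1 := quadraticChar_neg_one_iff_not_isSquare.2 hsq
      rw [hχ] at h4
      rw [hDbar x, if_neg hsq]
      omega
  · intro g hg
    set X := Finset.univ.filter (fun x : F => x ≠ 0) with hX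
    set B := Finset.univ.filter (fun d : F => d ∈ D ∧ d + g ∈ D) with hB
    set c := B.card with hc
    have hmemS : ∀ (x y : F), y ∈ D ∩ D.image (· + x) ↔ y ∈ D ∧ y - x ∈ D := by
      intro x y
      simp only [Finset.mem_inter, Finset.mem_image, and_congr_right_iff]
      intro _
      constructor
      · rintro ⟨a, ha, rfl⟩; simpa using ha
      · intro h; exact ⟨y - x, h, by ring⟩
    have hsqneg : IsSquare (-1 : F) := by
      rw [FiniteField.isSquare_neg_one_iff, hF]; omega
    have hnegD : ∀ y : F, -y ∈ D ↔ y ∈ D := by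
      intro y
      simp only [hmemD, neg_ne_zero]
      constructor
      · rintro ⟨h1, h2⟩
        exact ⟨h1, by have := hsqneg.mul h2; simpa using this⟩
      · rintro ⟨h1, h2⟩
        exact ⟨h1, by have := hsqneg.mul h2; simpa using this⟩
    have hmemDbar : ∀ x : F, ∀ d : F,
        d ∈ Dbar x ↔ ((d ∈ D ∧ d - x ∈ D) ∨ (d = 0 ∧ IsSquare x)) := by
      intro x d
      rw [hDbar x]
      by_cases hs : IsSquare x
      · rw [if_pos hs, Finset.mem_insert, hmemS x d]
        constructor
        · rintro (rfl | h); exacts [Or.inr ⟨rfl, hs⟩, Or.inl h]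
        · rintro (h | ⟨rfl, _⟩); exacts [Or.inr h, Or.inl rfl]
      · rw [if_neg hs, hmemS x d]
        constructor
        · exact Or.inl
        · rintro (h | ⟨_, h⟩); exacts [h, absurd h hs]
    have hcc : (D ∩ D.image (· + g)).card = c := by
      apply Finset.card_nbij' (i := fun y => y - g) (j := fun z => z + g)
      · intro y hy
        rw [Finset.mem_coe, hmemS g y] at hy
        simp only [hB, Finset.mem_coe, Finset.mem_filter, Finset.mem_univ, true_and]
        exact ⟨hy.2, by rw [sub_add_cancel]; exact hy.1⟩
      · intro z hz
        simp only [hB, Finset.mem_coe, Finset.mem_filter, Finset.mem_univ, true_and] at hz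
        simp only [Finset.mem_coe]
        rw [hmemS g]
        exact ⟨hz.2, by rw [add_sub_cancel_right]; exact hz.1⟩
      · intro y _; ring
      · intro z _; ring
    have h4c : 4 * (c : ℤ) = (q : ℤ) - 3 - 2 * quadraticChar F g := by
      rw [← hcc]; exact hcard g hg
    have stepA : ∀ x : F,
        (((Dbar x) ×ˢ (Dbar x)).filter (fun p => p.1 ≠ p.2 ∧ p.1 - p.2 = g)).card
          = ((Dbar x).filter (fun d => d + g ∈ Dbar x)).card := by
      intro x
      apply Finset.card_nbij' (i := fun p => p.2) (j := fun d => (d + g, d))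
      · rintro ⟨p1, p2⟩ hp
        simp only [Finset.mem_coe, Finset.mem_filter, Finset.mem_product] at hp ⊢
        obtain ⟨⟨h1, h2⟩, _, hdiff⟩ := hp
        refine ⟨h2, ?_⟩
        have : p2 + g = p1 := by rw [← hdiff]; ring
        rwa [this]
      · intro d hd
        simp only [Finset.mem_coe, Finset.mem_filter, Finset.mem_product] at hd ⊢
        refine ⟨⟨hd.2, hd.1⟩, ?_, by ring⟩
        intro h
        exact hg (by simpa using congrArg (· - d) h)
      · rintro ⟨p1, p2⟩ hp
        simp only [Finset.mem_coe, Finset.mem_filter, Finset.mem_product] at hp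
        obtain ⟨_, _, hdiff⟩ := hp
        have : p2 + g = p1 := by rw [← hdiff]; ring
        simp [this]
      · intro d _; rfl
    have cardind : ∀ (s : Finset F), s.card = ∑ d : F, if d ∈ s then 1 else 0 := by
      intro s
      rw [Finset.sum_ite_mem, Finset.univ_inter, Finset.sum_const, smul_eq_mul, mul_one]
    have stepB : ∀ x ∈ X, ((Dbar x).filter (fun d => d + g ∈ Dbar x)).card =
        (Finset.univ.filter
          (fun d : F => (d ∈ D ∧ d + g ∈ D) ∧ (d - x ∈ D ∧ d + g - x ∈ D))).card
        + ((if (IsSquare x ∧ g ∈ D ∧ g - x ∈ D) then 1 else 0)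
          + (if (IsSquare x ∧ g ∈ D ∧ g + x ∈ D) then 1 else 0)) := by
      intro x hx
      have hx0 : x ≠ 0 := by simpa [hX] using hx
      have e0 : (if (IsSquare x ∧ g ∈ D ∧ g - x ∈ D) then 1 else 0)
          = ∑ d : F, if d = 0 ∧ (IsSquare x ∧ g ∈ D ∧ g - x ∈ D) then 1 else 0 := by
        by_cases hC : IsSquare x ∧ g ∈ D ∧ g - x ∈ D <;> simp [hC]
      have e1 : (if (IsSquare x ∧ g ∈ D ∧ g + x ∈ D) then 1 else 0)
          = ∑ d : F, if d = -g ∧ (IsSquare x ∧ g ∈ D ∧ g + x ∈ D) then 1 else 0 := by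
        by_cases hC : IsSquare x ∧ g ∈ D ∧ g + x ∈ D <;> simp [hC]
      rw [cardind ((Dbar x).filter _), cardind (Finset.univ.filter _), e0, e1,
        ← Finset.sum_add_distrib, ← Finset.sum_add_distrib]
      apply Finset.sum_congr rfl
      intro d _
      simp only [Finset.mem_filter, Finset.mem_univ, true_and, hmemDbar x]
      by_cases hd0 : d = 0
      · subst hd0
        have hng : (0 : F) ≠ -g := fun h => hg (by simpa using h.symm)
        have hgx : g - x ∈ D ↔ x - g ∈ D := by rw [← hnegD, neg_sub]
        by_cases hs : IsSquare x <;> by_cases h1 : g ∈ D <;> by_cases h2 : g - x ∈ D <;>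
          simp [hs, h1, h2, h0D, hg, hng, sub_eq_neg_add, zero_add]
      · by_cases hdg : d = -g
        · subst hdg
          have hL1 : -g ∈ D ↔ g ∈ D := hnegD g
          have hL2 : -g - x ∈ D ↔ g + x ∈ D := by
            rw [← hnegD (g + x)]; ring_nf
          have hL3 : -g + g = (0 : F) := by ring
          rw [hL3]
          by_cases hs : IsSquare x <;> by_cases h1 : g ∈ D <;> by_cases h2 : g + x ∈ D <;>
            simp [hs, h1, h2, h0D, hg, hL1, hL2, neg_eq_zero]
        · have hdg0 : d + g ≠ 0 := fun h => hdg (by linear_combination h)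
          simp only [hd0, hdg, false_and, if_false, add_zero]
          exact if_congr (by tauto) rfl rfl
    have hSum1 : ∑ x ∈ X, (Finset.univ.filter
          (fun d : F => (d ∈ D ∧ d + g ∈ D) ∧ (d - x ∈ D ∧ d + g - x ∈ D))).card
        = c * (c - 1) := by
      have inner : ∀ d : F, d ∈ D ∧ d + g ∈ D →
          (X.filter (fun x => d - x ∈ D ∧ d + g - x ∈ D)).card = c - 1 := by
        intro d hd
        have hdB : d ∈ B := by simp [hB, hd.1, hd.2]
        have : (X.filter (fun x => d - x ∈ D ∧ d + g - x ∈ D)).card = (B.erase d).card := by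
          apply Finset.card_nbij' (i := fun x => d - x) (j := fun z => d - z)
          · intro x hx
            simp only [hX, Finset.mem_coe, Finset.mem_filter, Finset.mem_univ, true_and] at hx
            simp only [Finset.mem_coe, Finset.mem_erase, hB, Finset.mem_filter, Finset.mem_univ, true_and]
            refine ⟨fun h => hx.1 (by linear_combination -h), hx.2.1, ?_⟩
            have : d - x + g = d + g - x := by ring
            rw [this]; exact hx.2.2
          · intro z hz
            simp only [Finset.mem_coe, Finset.mem_erase, hB, Finset.mem_filter, Finset.mem_univ, true_and] at hz
            simp only [hX, Finset.mem_coe, Finset.mem_filter, Finset.mem_univ, true_and]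
            refine ⟨fun h => hz.1 (by linear_combination -h), ?_, ?_⟩
            · have : d - (d - z) = z := by ring
              rw [this]; exact hz.2.1
            · have : d + g - (d - z) = z + g := by ring
              rw [this]; exact hz.2.2
          · intro x _; ring
          · intro z _; ring
        rw [this, Finset.card_erase_of_mem hdB]
      calc ∑ x ∈ X, (Finset.univ.filter
            (fun d : F => (d ∈ D ∧ d + g ∈ D) ∧ (d - x ∈ D ∧ d + g - x ∈ D))).card
          = ∑ x ∈ X, ∑ d : F,
              (if (d ∈ D ∧ d + g ∈ D) ∧ (d - x ∈ D ∧ d + g - x ∈ D) then 1 else 0) := by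
            exact Finset.sum_congr rfl fun x _ => Finset.card_filter _ _
        _ = ∑ d : F, ∑ x ∈ X,
              (if (d ∈ D ∧ d + g ∈ D) ∧ (d - x ∈ D ∧ d + g - x ∈ D) then 1 else 0) :=
            Finset.sum_comm
        _ = ∑ d : F, (if d ∈ D ∧ d + g ∈ D then c - 1 else 0) := by
            refine Finset.sum_congr rfl fun d _ => ?_
            by_cases hd : d ∈ D ∧ d + g ∈ D
            · rw [if_pos hd, ← inner d hd, Finset.card_filter]
              exact Finset.sum_congr rfl fun x _ => by simp [hd.1, hd.2]
            · rw [if_neg hd]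
              exact Finset.sum_eq_zero fun x _ => by simp [hd]
        _ = ∑ d ∈ B, (c - 1) := by rw [hB, Finset.sum_filter]
        _ = c * (c - 1) := by rw [Finset.sum_const, smul_eq_mul]
    have hSum2 : ∑ x ∈ X, (if (IsSquare x ∧ g ∈ D ∧ g - x ∈ D) then 1 else 0)
        = if g ∈ D then c else 0 := by
      rw [(Finset.card_filter _ _).symm]
      by_cases hgD : g ∈ D
      · rw [if_pos hgD]
        apply Finset.card_nbij' (i := fun x => x - g) (j := fun z => z + g)
        · intro x hx
          simp only [hX, Finset.mem_coe, Finset.mem_filter, Finset.mem_univ, true_and] at hx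
          obtain ⟨hx0, hs, _, hgx⟩ := hx
          simp only [hB, Finset.mem_coe, Finset.mem_filter, Finset.mem_univ, true_and]
          constructor
          · rw [← hnegD, neg_sub]
            exact hgx
          · rw [sub_add_cancel]
            exact (hmemD x).2 ⟨hx0, hs⟩
        · intro z hz
          simp only [hB, Finset.mem_coe, Finset.mem_filter, Finset.mem_univ, true_and] at hz
          simp only [hX, Finset.mem_coe, Finset.mem_filter, Finset.mem_univ, true_and]
          have hzg : z + g ∈ D := hz.2
          refine ⟨((hmemD _).1 hzg).1, ((hmemD _).1 hzg).2, hgD, ?_⟩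
          have : g - (z + g) = -z := by ring
          rw [this, hnegD]
          exact hz.1
        · intro x _; ring
        · intro z _; ring
      · rw [if_neg hgD]
        rw [Finset.card_eq_zero, Finset.filter_eq_empty_iff]
        rintro x _ ⟨_, h, _⟩
        exact hgD h
    have hSum3 : ∑ x ∈ X, (if (IsSquare x ∧ g ∈ D ∧ g + x ∈ D) then 1 else 0)
        = if g ∈ D then c else 0 := by
      rw [(Finset.card_filter _ _).symm]
      by_cases hgD : g ∈ D
      · rw [if_pos hgD]
        congr 1
        ext x
        simp only [hX, hB, Finset.mem_filter, Finset.mem_univ, true_and]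
        constructor
        · rintro ⟨hx0, hs, _, hgx⟩
          exact ⟨(hmemD x).2 ⟨hx0, hs⟩, by rwa [add_comm]⟩
        · rintro ⟨hxD, hxg⟩
          exact ⟨((hmemD x).1 hxD).1, ((hmemD x).1 hxD).2, hgD, by rwa [add_comm]⟩
      · rw [if_neg hgD]
        rw [Finset.card_eq_zero, Finset.filter_eq_empty_iff]
        rintro x _ ⟨_, h, _⟩
        exact hgD h
    rw [Finset.sum_congr rfl (fun x hx => (stepA x).trans (stepB x hx)),
      Finset.sum_add_distrib, Finset.sum_add_distrib, hSum1, hSum2, hSum3]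
    by_cases hgD : g ∈ D
    · have hχ : quadraticChar F g = 1 :=
        (quadraticChar_one_iff_isSquare hg).2 ((hmemD g).1 hgD).2
      rw [hχ] at h4c
      rw [if_pos hgD]
      rcases Nat.eq_zero_or_pos c with h0 | h1
      · have hq5' : q = 5 := by rw [h0] at h4c; push_cast at h4c; omega
        rw [h0, hq5']
        norm_num
      · zify [h1, (by omega : 1 ≤ q), hq5]
        linear_combination ((4 : ℤ) * c + (q : ℤ) - 1) * h4c
    · have hχ : quadraticChar F g = -1 :=
        quadraticChar_neg_one_iff_not_isSquare.2
          (fun hs => hgD ((hmemD g).2 ⟨hg, hs⟩))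
      rw [hχ] at h4c
      rw [if_neg hgD]
      have h1 : 1 ≤ c := by omega
      zify [h1, (by omega : 1 ≤ q), hq5]
      linear_combination ((4 : ℤ) * c + (q : ℤ) - 5) * h4c
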